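/- arXiv:2306.14496 — 3 statements merged into one kernel-verified Lean document; each statement's English description precedes it below -/
import Mathlib

section
/- Let U be a real Hilbert space, M : U → U a bounded self-adjoint positive semidefinite linear operator, c ∈ ℝ, d ∈ U, and J(u) = ⟨Mu,u⟩ + ⟨d,u⟩ + c. For each ε > 0 let u^ε be the unique minimizer of J^ε(u) = J(u) + ε‖u‖², and let V = inf_u J(u) and V^ε = inf_u J^ε(u). Then V^ε is nondecreasing in ε and lim_{ε→0} V^ε = V; moreover lim_{ε→0} J(u^ε) = V, i.e., (u^ε) is a minimizing sequence of J. -/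
open RealInnerProductSpace Topology Filter

theorem regularized_value_converges_and_minimizing_sequence
    {U : Type*} [NormedAddCommGroup U] [InnerProductSpace ℝ U] [CompleteSpace U]
    (M : U →L[ℝ] U) (hM : IsSelfAdjoint M) (hpos : ∀ u : U, 0 ≤ ⟪M u, u⟫)
    (c : ℝ) (d : U) (J : U → ℝ) (hJ : ∀ u, J u = ⟪M u, u⟫ + ⟪d, u⟫ + c)
    (uE : ℝ → U)
    (hmin : ∀ ε : ℝ, 0 < ε → ∀ u : U,
      J (uE ε) + ε * ‖uE ε‖ ^ 2 ≤ J u + ε * ‖u‖ ^ 2)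
    (huniq : ∀ ε : ℝ, 0 < ε → ∀ v : U,
      (∀ u : U, J v + ε * ‖v‖ ^ 2 ≤ J u + ε * ‖u‖ ^ 2) → v = uE ε)
    (V : EReal) (hV : V = ⨅ u : U, ((J u : ℝ) : EReal))
    (Veps : ℝ → EReal)
    (hVeps : ∀ ε, Veps ε = ⨅ u : U, ((J u + ε * ‖u‖ ^ 2 : ℝ) : EReal)) :
    (∀ ε₁ ε₂ : ℝ, 0 < ε₁ → ε₁ ≤ ε₂ → Veps ε₁ ≤ Veps ε₂) ∧
    Tendsto Veps (𝓝[>] (0 : ℝ)) (𝓝 V) ∧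
    Tendsto (fun ε => ((J (uE ε) : ℝ) : EReal)) (𝓝[>] (0 : ℝ)) (𝓝 V) := by
  have keylb : ∀ ε : ℝ, 0 ≤ ε → V ≤ Veps ε := by
    intro ε hε
    rw [hV, hVeps]
    refine le_iInf fun u => (iInf_le _ u).trans ?_
    exact EReal.coe_le_coe_iff.2 (by nlinarith [sq_nonneg ‖u‖])
  have keyub : ∀ ε : ℝ, ∀ u : U, Veps ε ≤ ((J u + ε * ‖u‖ ^ 2 : ℝ) : EReal) := by
    intro ε u; rw [hVeps]; exact iInf_le _ u
  have hmono : ∀ ε₁ ε₂ : ℝ, 0 < ε₁ → ε₁ ≤ ε₂ → Veps ε₁ ≤ Veps ε₂ := by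
    intro ε₁ ε₂ h1 h12
    rw [hVeps, hVeps]
    exact iInf_mono fun u => EReal.coe_le_coe_iff.2 (by nlinarith [sq_nonneg ‖u‖])
  have htend : Tendsto Veps (𝓝[>] (0 : ℝ)) (𝓝 V) := by
    rw [tendsto_order]
    constructor
    · intro a ha
      filter_upwards [self_mem_nhdsWithin] with ε hε
      exact ha.trans_le (keylb ε (le_of_lt hε))
    · intro b hb
      rw [hV] at hb
      obtain ⟨u, hu⟩ := iInf_lt_iff.1 hb
      have hcont : Tendsto (fun ε : ℝ => ((J u + ε * ‖u‖ ^ 2 : ℝ) : EReal))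
          (𝓝[>] (0 : ℝ)) (𝓝 ((J u : ℝ) : EReal)) := by
        have : Tendsto (fun ε : ℝ => (J u + ε * ‖u‖ ^ 2 : ℝ)) (𝓝[>] (0 : ℝ))
            (𝓝 (J u)) := by
          have h0 : Tendsto (fun ε : ℝ => (J u + ε * ‖u‖ ^ 2 : ℝ)) (𝓝 (0 : ℝ))
              (𝓝 (J u + 0 * ‖u‖ ^ 2)) := by
            exact (continuous_const.add (continuous_id.mul continuous_const)).tendsto 0
          simpa using h0.mono_left nhdsWithin_le_nhds
        exact (EReal.tendsto_coe).2 this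
      filter_upwards [hcont.eventually_lt_const hu] with ε hε
      exact (keyub ε u).trans_lt hε
  refine ⟨hmono, htend, ?_⟩
  refine tendsto_of_tendsto_of_tendsto_of_le_of_le' tendsto_const_nhds htend ?_ ?_
  · filter_upwards with ε
    rw [hV]
    exact iInf_le _ _
  · filter_upwards [self_mem_nhdsWithin] with ε (hε : (0:ℝ) < ε)
    rw [hVeps]
    refine le_iInf fun u => EReal.coe_le_coe_iff.2 ?_
    have := hmin ε hε u
    nlinarith [sq_nonneg ‖uE ε‖]
end

section
/- Let ω₀, ω₁, ω₂ be independent random variables with E ω_k = 0 and E ω_k² = 1. Define x₀ = ξ ∈ ℝ (deterministic, ξ ≠ 0), x_{k+1} = u_k + x_k ω_k, with controls u_k = λ ω_k for a constant λ ∈ ℝ, adapted appropriately. Then E x₃² = 3λ² + 2λξ + ξ², and the cost J = −E x₃² + Σ_{k=0}^{2} E u_k² equals −2λξ − ξ²; hence inf over λ ∈ ℝ of J is −∞. -/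
open MeasureTheory ProbabilityTheory

theorem example51_value_unbounded
    {Ω : Type*} [MeasurableSpace Ω] (μ : Measure Ω) [IsProbabilityMeasure μ]
    (w : Fin 3 → Ω → ℝ)
    (hmeas : ∀ k, Measurable (w k))
    (hindep : iIndepFun w μ)
    (hL2 : ∀ k, MemLp (w k) 2 μ)
    (hmean : ∀ k, ∫ ω, w k ω ∂μ = 0)
    (hvar : ∀ k, ∫ ω, (w k ω) ^ 2 ∂μ = 1)
    (ξ : ℝ) (hξ : ξ ≠ 0)
    (X : ℝ → ℕ → Ω → ℝ)
    (hX0 : ∀ lam : ℝ, X lam 0 = fun _ => ξ)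
    (hXrec : ∀ lam : ℝ, ∀ k : Fin 3,
      X lam ((k : ℕ) + 1) = fun ω => lam * w k ω + X lam (k : ℕ) ω * w k ω)
    (J : ℝ → ℝ)
    (hJ : ∀ lam : ℝ,
      J lam = -∫ ω, (X lam 3 ω) ^ 2 ∂μ + ∑ k : Fin 3, ∫ ω, (lam * w k ω) ^ 2 ∂μ) :
    (∀ lam : ℝ,
      (∫ ω, (X lam 3 ω) ^ 2 ∂μ = 3 * lam ^ 2 + 2 * lam * ξ + ξ ^ 2) ∧
      J lam = -2 * lam * ξ - ξ ^ 2) ∧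
    ¬ BddBelow (Set.range J) := by
  have hwint : ∀ k, Integrable (w k) μ := fun k => (hL2 k).integrable one_le_two
  have hwsq : ∀ k, Integrable (fun ω => (w k ω) ^ 2) μ := fun k => (hL2 k).integrable_sq
  have key : ∀ lam : ℝ,
      (∫ ω, (X lam 3 ω) ^ 2 ∂μ = 3 * lam ^ 2 + 2 * lam * ξ + ξ ^ 2) ∧
      J lam = -2 * lam * ξ - ξ ^ 2 := by
    intro lam
    -- explicit formulas for X
    have h1 : X lam 1 = fun ω => lam * w 0 ω + ξ * w 0 ω := by
      have := hXrec lam 0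
      simp only [Fin.val_zero, zero_add, hX0] at this
      simpa using this
    have h2 : X lam 2 = fun ω => lam * w 1 ω + (lam * w 0 ω + ξ * w 0 ω) * w 1 ω := by
      have := hXrec lam 1
      simp only [Fin.val_one] at this
      rw [this, h1]
    have h3 : X lam 3 = fun ω =>
        lam * w 2 ω + (lam * w 1 ω + (lam * w 0 ω + ξ * w 0 ω) * w 1 ω) * w 2 ω := by
      have := hXrec lam 2
      simp only [show ((2 : Fin 3) : ℕ) = 2 from rfl] at this
      rw [this, h2]
    -- G ω = lam + X1 ω,  X2 = G * w1
    set G : Ω → ℝ := fun ω => lam + (lam * w 0 ω + ξ * w 0 ω) with hG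
    -- F ω = lam + X2 ω,  X3 = F * w2
    set F : Ω → ℝ := fun ω => lam + (lam * w 1 ω + (lam * w 0 ω + ξ * w 0 ω) * w 1 ω) with hF
    have hGmeas : Measurable G := by
      apply Measurable.add measurable_const
      exact ((measurable_const.mul (hmeas 0)).add (measurable_const.mul (hmeas 0)))
    have hFmeas : Measurable F := by
      apply Measurable.add measurable_const
      apply Measurable.add (measurable_const.mul (hmeas 1))
      exact ((measurable_const.mul (hmeas 0)).add
        (measurable_const.mul (hmeas 0))).mul (hmeas 1)
    -- independence facts
    have hi01 : IndepFun (w 0) (w 1) μ := hindep.indepFun (by decide)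
    have hpair : IndepFun (fun ω => (w 0 ω, w 1 ω)) (w 2) μ :=
      hindep.indepFun_prodMk hmeas 0 1 2 (by decide) (by decide)
    have hIG : IndepFun G (w 1) μ := by
      have : G = (fun x : ℝ => lam + (lam * x + ξ * x)) ∘ (w 0) := rfl
      rw [this]
      exact hi01.comp (by fun_prop) measurable_id
    have hIF : IndepFun F (w 2) μ := by
      have : F = (fun p : ℝ × ℝ => lam + (lam * p.2 + (lam * p.1 + ξ * p.1) * p.2)) ∘
          (fun ω => (w 0 ω, w 1 ω)) := rfl
      rw [this]
      exact hpair.comp (by fun_prop) measurable_id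
    -- moments of G
    have hGint : Integrable G μ := by
      apply Integrable.add (integrable_const _)
      exact ((hwint 0).const_mul lam).add ((hwint 0).const_mul ξ)
    have hGsqint : Integrable (fun ω => (G ω) ^ 2) μ := by
      have : (fun ω => (G ω) ^ 2) = fun ω =>
          (lam ^ 2 + (2 * lam * (lam + ξ)) * w 0 ω) + (lam + ξ) ^ 2 * (w 0 ω) ^ 2 := by
        funext ω; simp only [hG]; ring
      rw [this]
      exact ((integrable_const _).add ((hwint 0).const_mul _)).add ((hwsq 0).const_mul _)
    have hiA : Integrable (fun ω => lam * w 0 ω) μ := (hwint 0).const_mul lam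
    have hiB : Integrable (fun ω => ξ * w 0 ω) μ := (hwint 0).const_mul ξ
    have hiAB : Integrable (fun ω => lam * w 0 ω + ξ * w 0 ω) μ := hiA.add hiB
    have hGmean : ∫ ω, G ω ∂μ = lam := by
      have : ∫ ω, G ω ∂μ = ∫ ω, (lam : ℝ) ∂μ + ∫ ω, lam * w 0 ω + ξ * w 0 ω ∂μ :=
        integral_add (integrable_const _) hiAB
      rw [this, integral_add hiA hiB, integral_const_mul, integral_const_mul, hmean,
        integral_const]
      simp
    have hGsq : ∫ ω, (G ω) ^ 2 ∂μ = lam ^ 2 + (lam + ξ) ^ 2 := by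
      have e : (fun ω => (G ω) ^ 2) = fun ω =>
          (lam ^ 2 + (2 * lam * (lam + ξ)) * w 0 ω) + (lam + ξ) ^ 2 * (w 0 ω) ^ 2 := by
        funext ω; simp only [hG]; ring
      have hiC : Integrable (fun ω => (2 * lam * (lam + ξ)) * w 0 ω) μ :=
        (hwint 0).const_mul _
      have hiD : Integrable (fun ω => (lam + ξ) ^ 2 * (w 0 ω) ^ 2) μ :=
        (hwsq 0).const_mul _
      have hiCD : Integrable (fun ω => lam ^ 2 + (2 * lam * (lam + ξ)) * w 0 ω) μ :=
        (integrable_const _).add hiC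
      rw [e, integral_add hiCD hiD, integral_add (integrable_const _) hiC,
        integral_const_mul, integral_const_mul, hmean, hvar, integral_const]
      simp
    -- moments of X2 = G * w1
    have hX2mean : ∫ ω, G ω * w 1 ω ∂μ = 0 := by
      rw [hIG.integral_fun_mul_eq_mul_integral hGint.aestronglyMeasurable (hwint 1).aestronglyMeasurable, hmean]
      ring
    have hX2sqint : Integrable (fun ω => (G ω) ^ 2 * (w 1 ω) ^ 2) μ := by
      have hind2 : IndepFun (fun ω => (G ω) ^ 2) (fun ω => (w 1 ω) ^ 2) μ :=
        hIG.comp (measurable_id.pow_const 2) (measurable_id.pow_const 2)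
      exact hind2.integrable_mul hGsqint (hwsq 1)
    have hX2int : Integrable (fun ω => G ω * w 1 ω) μ := by
      have := hIG.integrable_mul hGint (hwint 1)
      simpa [Pi.mul_def] using this
    have hX2sq : ∫ ω, (G ω) ^ 2 * (w 1 ω) ^ 2 ∂μ = lam ^ 2 + (lam + ξ) ^ 2 := by
      have hind2 : IndepFun (fun ω => (G ω) ^ 2) (fun ω => (w 1 ω) ^ 2) μ :=
        hIG.comp (measurable_id.pow_const 2) (measurable_id.pow_const 2)
      rw [hind2.integral_fun_mul_eq_mul_integral (hGsqint.aestronglyMeasurable) (hwsq 1).aestronglyMeasurable,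
        hvar, hGsq]
      ring
    -- ∫ F² = lam² + ∫X2² (since ∫X2 = 0)
    have hFsq : ∫ ω, (F ω) ^ 2 ∂μ = 2 * lam ^ 2 + (lam + ξ) ^ 2 := by
      have e : (fun ω => (F ω) ^ 2) = fun ω =>
          (lam ^ 2 + (2 * lam) * (G ω * w 1 ω)) + (G ω * w 1 ω) ^ 2 := by
        funext ω; simp only [hF, hG]; ring
      have e2 : (fun ω => (G ω * w 1 ω) ^ 2) = fun ω => (G ω) ^ 2 * (w 1 ω) ^ 2 := by
        funext ω; ring
      have hiC : Integrable (fun ω => (2 * lam) * (G ω * w 1 ω)) μ := hX2int.const_mul _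
      have hiD : Integrable (fun ω => (G ω * w 1 ω) ^ 2) μ := by rw [e2]; exact hX2sqint
      have hiCD : Integrable (fun ω => lam ^ 2 + (2 * lam) * (G ω * w 1 ω)) μ :=
        (integrable_const _).add hiC
      rw [e, integral_add hiCD hiD, integral_add (integrable_const _) hiC,
        integral_const_mul, hX2mean, e2, hX2sq, integral_const]
      simp
      ring
    -- ∫ X3² = ∫ F² * ∫ w2² = ∫ F²
    have hFsqint : Integrable (fun ω => (F ω) ^ 2) μ := by
      have e : (fun ω => (F ω) ^ 2) = fun ω =>
          (lam ^ 2 + (2 * lam) * (G ω * w 1 ω)) + (G ω * w 1 ω) ^ 2 := by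
        funext ω; simp only [hF, hG]; ring
      have e2 : (fun ω => (G ω * w 1 ω) ^ 2) = fun ω => (G ω) ^ 2 * (w 1 ω) ^ 2 := by
        funext ω; ring
      rw [e]
      exact ((integrable_const _).add (hX2int.const_mul _)).add (by rw [e2]; exact hX2sqint)
    have hX3sq : ∫ ω, (X lam 3 ω) ^ 2 ∂μ = 3 * lam ^ 2 + 2 * lam * ξ + ξ ^ 2 := by
      have e : (fun ω => (X lam 3 ω) ^ 2) = fun ω => (F ω) ^ 2 * (w 2 ω) ^ 2 := by
        funext ω; rw [h3]; simp only [hF]; ring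
      have hind2 : IndepFun (fun ω => (F ω) ^ 2) (fun ω => (w 2 ω) ^ 2) μ :=
        hIF.comp (measurable_id.pow_const 2) (measurable_id.pow_const 2)
      rw [e, hind2.integral_fun_mul_eq_mul_integral hFsqint.aestronglyMeasurable (hwsq 2).aestronglyMeasurable,
        hvar, hFsq]
      ring
    refine ⟨hX3sq, ?_⟩
    have hsum : ∑ k : Fin 3, ∫ ω, (lam * w k ω) ^ 2 ∂μ = 3 * lam ^ 2 := by
      have : ∀ k : Fin 3, ∫ ω, (lam * w k ω) ^ 2 ∂μ = lam ^ 2 := by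
        intro k
        simp only [mul_pow]
        rw [integral_const_mul, hvar, mul_one]
      rw [Finset.sum_congr rfl (fun k _ => this k), Finset.sum_const]
      simp only [Finset.card_univ, Fintype.card_fin, nsmul_eq_mul]
      push_cast
      ring
    rw [hJ, hX3sq, hsum]; ring
  refine ⟨key, ?_⟩
  rintro ⟨b, hb⟩
  have hJval : ∀ lam, J lam = -2 * lam * ξ - ξ ^ 2 := fun lam => (key lam).2
  set lam := (|b| + ξ ^ 2 + 1) / (2 * ξ) with hlam
  have hmem : J lam ∈ Set.range J := ⟨lam, rfl⟩
  have hle := hb hmem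
  rw [hJval] at hle
  have h2ξ : (2 : ℝ) * ξ ≠ 0 := by
    exact mul_ne_zero two_ne_zero hξ
  have hval : -2 * lam * ξ - ξ ^ 2 = -(|b| + ξ ^ 2 + 1) - ξ ^ 2 := by
    rw [hlam]
    field_simp
  rw [hval] at hle
  have h1 : -(|b| + ξ ^ 2 + 1) - ξ ^ 2 < -|b| := by nlinarith [sq_nonneg ξ]
  have h2 : -|b| ≤ b := neg_abs_le b
  linarith
end

section
/- Let U be a real Hilbert space, J(u) = ⟨Mu,u⟩ + ⟨d,u⟩ + c with M bounded self-adjoint, M ≥ 0, and suppose inf J > −∞ with minimizer v*. For ε > 0 let u^ε be the unique minimizer of J + ε‖·‖². If u^{ε_n} ⇀ u* weakly along a sequence ε_n → 0, then u* minimizes J and ‖u^{ε_n}‖ → ‖u*‖, hence u^{ε_n} → u* strongly in U. -/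
open RealInnerProductSpace Topology Filter

theorem weak_convergence_of_regularized_minimizers_implies_strong
    {U : Type*} [NormedAddCommGroup U] [InnerProductSpace ℝ U] [CompleteSpace U]
    (M : U →L[ℝ] U) (hM : IsSelfAdjoint M) (hpos : ∀ u : U, 0 ≤ ⟪M u, u⟫)
    (c : ℝ) (d : U) (J : U → ℝ) (hJ : ∀ u, J u = ⟪M u, u⟫ + ⟪d, u⟫ + c)
    (vstar : U) (hvstar : ∀ u, J vstar ≤ J u)
    (uE : ℝ → U)
    (hmin : ∀ ε : ℝ, 0 < ε → ∀ u : U,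
      J (uE ε) + ε * ‖uE ε‖ ^ 2 ≤ J u + ε * ‖u‖ ^ 2)
    (huniq : ∀ ε : ℝ, 0 < ε → ∀ v : U,
      (∀ u : U, J v + ε * ‖v‖ ^ 2 ≤ J u + ε * ‖u‖ ^ 2) → v = uE ε)
    (εn : ℕ → ℝ) (hεpos : ∀ n, 0 < εn n)
    (hεlim : Tendsto εn atTop (𝓝 0))
    (ustar : U)
    (hweak : ∀ w : U,
      Tendsto (fun n => ⟪w, uE (εn n)⟫) atTop (𝓝 ⟪w, ustar⟫)) :
    (∀ u, J ustar ≤ J u) ∧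
    Tendsto (fun n => ‖uE (εn n)‖) atTop (𝓝 ‖ustar‖) ∧
    Tendsto (fun n => uE (εn n)) atTop (𝓝 ustar) := by
  have hsym : ∀ x y : U, ⟪M x, y⟫ = ⟪x, M y⟫ :=
    ContinuousLinearMap.isSelfAdjoint_iff_isSymmetric.mp hM
  -- convexity lower bound: J u ≥ J v + ⟪2 • M v + d, u - v⟫
  have hconv : ∀ u v : U, J v + ⟪(2:ℝ) • M v + d, u - v⟫ ≤ J u := by
    intro u v
    have h0 := hpos (u - v)
    have hexp : ⟪M (u - v), u - v⟫
        = ⟪M u, u⟫ - 2 * ⟪M v, u⟫ + ⟪M v, v⟫ := by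
      rw [map_sub, inner_sub_left, inner_sub_right, inner_sub_right]
      rw [hsym u v]
      ring_nf
      rw [real_inner_comm u (M v)]
      ring
    rw [hJ u, hJ v, inner_add_left, inner_smul_left, inner_sub_right,
      inner_sub_right]
    simp only [starRingEnd_apply, star_trivial]
    have := real_inner_comm v (M v)
    nlinarith [h0, hexp]
  -- lower bound sequence tends to J ustar
  set w : U := (2:ℝ) • M ustar + d with hw
  have hlow : Tendsto (fun n => J ustar + (⟪w, uE (εn n)⟫ - ⟪w, ustar⟫))
      atTop (𝓝 (J ustar)) := by
    have := (hweak w).sub_const ⟪w, ustar⟫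
    have h2 := this.const_add (J ustar)
    simpa using h2
  -- upper bound sequence tends to J vstar
  have hup : Tendsto (fun n => J vstar + εn n * ‖vstar‖ ^ 2) atTop
      (𝓝 (J vstar)) := by
    have := (hεlim.mul_const (‖vstar‖ ^ 2)).const_add (J vstar)
    simpa using this
  have hle : ∀ n, J ustar + (⟪w, uE (εn n)⟫ - ⟪w, ustar⟫)
      ≤ J vstar + εn n * ‖vstar‖ ^ 2 := by
    intro n
    have h1 : J ustar + ⟪w, uE (εn n) - ustar⟫ ≤ J (uE (εn n)) :=
      hconv (uE (εn n)) ustar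
    have h2 := hmin (εn n) (hεpos n) vstar
    have h3 : 0 ≤ εn n * ‖uE (εn n)‖ ^ 2 :=
      mul_nonneg (hεpos n).le (by positivity)
    rw [inner_sub_right] at h1
    linarith
  have hmin_ustar : J ustar ≤ J vstar :=
    le_of_tendsto_of_tendsto' hlow hup hle
  have hminimizer : ∀ u, J ustar ≤ J u := fun u =>
    hmin_ustar.trans (hvstar u)
  -- norm bound: ‖uE ε‖ ≤ ‖ustar‖
  have hnormle : ∀ n, ‖uE (εn n)‖ ≤ ‖ustar‖ := by
    intro n
    have h2 := hmin (εn n) (hεpos n) ustar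
    have h4 : J ustar ≤ J (uE (εn n)) := hminimizer _
    have h5 : ‖uE (εn n)‖ ^ 2 ≤ ‖ustar‖ ^ 2 := by
      have hε := hεpos n
      nlinarith
    nlinarith [norm_nonneg (uE (εn n)), norm_nonneg ustar]
  -- strong convergence: ‖uE εn - ustar‖² → 0
  have hsq : Tendsto (fun n => ‖uE (εn n) - ustar‖ ^ 2) atTop (𝓝 0) := by
    have hb : Tendsto (fun n => 2 * ‖ustar‖ ^ 2 - 2 * ⟪ustar, uE (εn n)⟫)
        atTop (𝓝 0) := by
      have := ((hweak ustar).const_mul 2).const_sub (2 * ‖ustar‖ ^ 2)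
      simpa [real_inner_self_eq_norm_sq] using this
    refine squeeze_zero (fun n => by positivity) (fun n => ?_) hb
    have hexp : ‖uE (εn n) - ustar‖ ^ 2
        = ‖uE (εn n)‖ ^ 2 - 2 * ⟪ustar, uE (εn n)⟫ + ‖ustar‖ ^ 2 := by
      rw [← real_inner_self_eq_norm_sq, inner_sub_sub_self,
        real_inner_self_eq_norm_sq, real_inner_self_eq_norm_sq,
        real_inner_comm]
      ring
    have h5 : ‖uE (εn n)‖ ^ 2 ≤ ‖ustar‖ ^ 2 := by
      nlinarith [hnormle n, norm_nonneg (uE (εn n))]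
    linarith [hexp.le, hexp.ge]
  have hdist : Tendsto (fun n => ‖uE (εn n) - ustar‖) atTop (𝓝 0) := by
    have := hsq.sqrt
    simpa [Real.sqrt_sq (norm_nonneg _)] using this
  have hstrong : Tendsto (fun n => uE (εn n)) atTop (𝓝 ustar) := by
    rw [tendsto_iff_norm_sub_tendsto_zero]
    exact hdist
  refine ⟨hminimizer, ?_, hstrong⟩
  exact (continuous_norm.tendsto ustar).comp hstrong
end
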